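/- Let n ≥ 1, let s : ℝⁿ → ℝ be C^∞, let ℓ ≥ 1 be an integer, and suppose there is a C^∞ function A with ‖∇s(x)‖² = 1 + s(x)^ℓ · A(x) for all x. Suppose f : ℝⁿ → ℝ is C^∞ and s′ := s · (1 + s^ℓ · f) satisfies ‖∇s′(x)‖² = 1 + s(x)^(ℓ+1) · A″(x) for all x, for some C^∞ function A″. Then there exists a C^∞ function g such that f(x) = −A(x)/(2(ℓ+1)) + s(x) · g(x) for all x. -/

import Mathlib

open InnerProductSpace Set

/-- Uniqueness assertion in the proof of Lemma 2.4 (flat background): if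
`‖∇s‖² = 1 + sˡ·A` and `s' := s·(1 + sˡ·f)` satisfies `‖∇s'‖² = 1 + s^(ℓ+1)·A''`
for smooth `A, f, A''`, then `f = -A/(2(ℓ+1)) + s·g` for a smooth function `g`. -/
theorem unit_defining_function_step_unique
    (n : ℕ) (hn : 1 ≤ n) (s A f A'' : EuclideanSpace ℝ (Fin n) → ℝ)
    (hs : ContDiff ℝ (⊤ : ℕ∞) s) (hA : ContDiff ℝ (⊤ : ℕ∞) A)
    (hf : ContDiff ℝ (⊤ : ℕ∞) f) (hA'' : ContDiff ℝ (⊤ : ℕ∞) A'')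
    (ℓ : ℕ) (hℓ : 1 ≤ ℓ)
    (h : ∀ x, ‖gradient s x‖ ^ 2 = 1 + s x ^ ℓ * A x)
    (h' : ∀ x, ‖gradient (fun z => s z * (1 + s z ^ ℓ * f z)) x‖ ^ 2
            = 1 + s x ^ (ℓ + 1) * A'' x) :
    ∃ g : EuclideanSpace ℝ (Fin n) → ℝ, ContDiff ℝ (⊤ : ℕ∞) g ∧
      ∀ x, f x = -A x / (2 * ((ℓ : ℝ) + 1)) + s x * g x := by
  obtain ⟨m, rfl⟩ : ∃ m, ℓ = m + 1 := ⟨ℓ - 1, (Nat.succ_pred_eq_of_pos hℓ).symm⟩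
  -- differentiability
  have hsd : Differentiable ℝ s := hs.differentiable (by simp)
  have hfd : Differentiable ℝ f := hf.differentiable (by simp)
  -- gradient of s' formula
  have grad' : ∀ x, gradient (fun z => s z * (1 + s z ^ (m + 1) * f z)) x
      = (1 + ((m : ℝ) + 2) * s x ^ (m + 1) * f x) • gradient s x
        + s x ^ (m + 2) • gradient f x := by
    intro x
    have hDs : HasFDerivAt s (fderiv ℝ s x) x := (hsd x).hasFDerivAt
    have hDf : HasFDerivAt f (fderiv ℝ f x) x := (hfd x).hasFDerivAt
    have hpow : HasFDerivAt (fun z => s z ^ (m + 1))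
        ((((m : ℝ) + 1) * s x ^ m) • fderiv ℝ s x) x := by
      have := (hasDerivAt_pow (m + 1) (s x)).comp_hasFDerivAt x hDs
      simp at this; exact this
    have h4 := hDs.mul ((hpow.mul hDf).const_add 1)
    have h5 := (hasFDerivAt_iff_hasGradientAt.mp h4).gradient
    show gradient (s * fun x => 1 + ((fun z => s z ^ (m + 1)) * f) x) x = _
    rw [h5]
    show (toDual ℝ (EuclideanSpace ℝ (Fin n))).symm _ = _
    have hgs : gradient s x = (toDual ℝ (EuclideanSpace ℝ (Fin n))).symm (fderiv ℝ s x) := rfl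
    have hgf : gradient f x = (toDual ℝ (EuclideanSpace ℝ (Fin n))).symm (fderiv ℝ f x) := rfl
    rw [hgs, hgf]
    simp only [map_add, map_smul, Pi.mul_apply]
    match_scalars <;> ring
  -- scalar auxiliary functions
  set P : EuclideanSpace ℝ (Fin n) → ℝ := fun x => inner ℝ (gradient s x) (gradient f x) with hP
  set Q : EuclideanSpace ℝ (Fin n) → ℝ := fun x => inner ℝ (gradient f x) (gradient f x) with hQ
  set c : ℝ := (m : ℝ) + 2 with hc
  -- the polynomial identity coming from h'
  have EQ : ∀ x, (1 + c * s x ^ (m + 1) * f x) ^ 2 * (1 + s x ^ (m + 1) * A x)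
      + 2 * (1 + c * s x ^ (m + 1) * f x) * s x ^ (m + 2) * P x
      + (s x ^ (m + 2)) ^ 2 * Q x = 1 + s x ^ (m + 2) * A'' x := by
    intro x
    have hx := h' x
    rw [grad' x, ← real_inner_self_eq_norm_sq] at hx
    simp only [inner_add_left, inner_add_right, real_inner_smul_left,
      real_inner_smul_right] at hx
    have hGG : (inner ℝ (gradient s x) (gradient s x) : ℝ) = 1 + s x ^ (m + 1) * A x := by
      rw [real_inner_self_eq_norm_sq]; exact h x
    have hsym : (inner ℝ (gradient f x) (gradient s x) : ℝ)
        = inner ℝ (gradient s x) (gradient f x) := real_inner_comm _ _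
    rw [hGG, hsym] at hx
    rw [hP, hQ, hc]
    push_cast at hx ⊢
    linear_combination hx
  -- the explicit remainder E and candidate g
  set E : EuclideanSpace ℝ (Fin n) → ℝ := fun x => s x ^ m * (2 * c * f x * A x + c ^ 2 * f x ^ 2)
      + s x ^ (2 * m + 1) * c ^ 2 * f x ^ 2 * A x
      + 2 * (1 + c * s x ^ (m + 1) * f x) * P x + s x ^ (m + 2) * Q x with hE
  set g : EuclideanSpace ℝ (Fin n) → ℝ := fun x => (A'' x - E x) / (2 * c) with hg
  -- smoothness
  have hgradcd : ∀ u : EuclideanSpace ℝ (Fin n) → ℝ, ContDiff ℝ (⊤ : ℕ∞) u → ContDiff ℝ (⊤ : ℕ∞) (gradient u) := by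
    intro u hu
    have h1 : ContDiff ℝ (⊤ : ℕ∞) (fderiv ℝ u) := (contDiff_infty_iff_fderiv.mp hu).2
    exact ((toDual ℝ (EuclideanSpace ℝ (Fin n))).symm.contDiff).comp h1
  have hPcd : ContDiff ℝ (⊤ : ℕ∞) P := ContDiff.inner ℝ (hgradcd s hs) (hgradcd f hf)
  have hQcd : ContDiff ℝ (⊤ : ℕ∞) Q := ContDiff.inner ℝ (hgradcd f hf) (hgradcd f hf)
  have hEcd : ContDiff ℝ (⊤ : ℕ∞) E := by
    rw [hE]
    fun_prop
  have hgcd : ContDiff ℝ (⊤ : ℕ∞) g := (hA''.sub hEcd).div_const _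
  -- equality on the dense set {s ≠ 0}
  have key : ∀ x, s x ≠ 0 → f x = -A x / (2 * c) + s x * g x := by
    intro x hx
    have h2 : s x ^ (m + 1) ≠ 0 := pow_ne_zero _ hx
    have hEQ := EQ x
    rw [hg, hE]
    have hc0 : (2 : ℝ) * c ≠ 0 := by rw [hc]; positivity
    field_simp
    rw [eq_div_iff (by rw [hc]; positivity)]
    apply mul_left_cancel₀ h2
    push_cast
    linear_combination hEQ
  -- density of {s ≠ 0}
  have hdense : Dense {x : EuclideanSpace ℝ (Fin n) | s x ≠ 0} := by
    rw [dense_iff_inter_open]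
    intro U hU ⟨x, hxU⟩
    by_contra hcon
    push_neg at hcon
    have hz : ∀ y ∈ U, s y = 0 := by
      intro y hy
      by_contra hsy
      have : y ∈ U ∩ {x | s x ≠ 0} := ⟨hy, hsy⟩
      rw [hcon] at this
      exact this
    have hev : s =ᶠ[nhds x] fun _ => (0 : ℝ) :=
      Filter.eventually_of_mem (hU.mem_nhds hxU) hz
    have hfd0 : fderiv ℝ s x = 0 := by
      rw [hev.fderiv_eq]; exact fderiv_const_apply _
    have hgrad0 : gradient s x = 0 := by
      show (toDual ℝ (EuclideanSpace ℝ (Fin n))).symm (fderiv ℝ s x) = 0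
      rw [hfd0, map_zero]
    have := h x
    rw [hgrad0, hz x hxU] at this
    simp [zero_pow] at this
  -- conclude by continuity
  refine ⟨g, hgcd, ?_⟩
  have hcont1 : Continuous f := hf.continuous
  have hcont2 : Continuous fun x => -A x / (2 * c) + s x * g x := by
    exact ((hA.continuous.neg).div_const _).add (hs.continuous.mul hgcd.continuous)
  have hfun : f = fun x => -A x / (2 * c) + s x * g x :=
    Continuous.ext_on hdense hcont1 hcont2 key
  intro x
  have : ((m : ℝ) + 1 + 1) = c := by rw [hc]; ring
  push_cast
  rw [this]
  exact congrFun hfun x
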